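/- arXiv:1411.2467 — 4 statements merged into one kernel-verified Lean document; each statement's English description precedes it below -/
import Mathlib

section
/- For f(x) = sign(x) on [-π,π] and λ₁ = u + iv with u ≠ 0 and (u,v) ≠ (0,0), the minimum over a ∈ ℂ of ‖f − a e^{λ₁x}‖² equals Φ(u+iv) = 1 − (2u/(u²+v²))·(cosh(πu) − cos(πv))²/(π·sinh(2πu)). -/
open MeasureTheory Complex

/-- The sign function: −1 for x < 0 and 1 for x ≥ 0, as a complex-valued function. -/
noncomputable def sgn (x : ℝ) : ℂ := if x < 0 then -1 else 1

open intervalIntegral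

lemma sgn_meas : Measurable sgn :=
  Measurable.ite (measurableSet_lt measurable_id measurable_const) measurable_const measurable_const

lemma norm_sgn (x : ℝ) : ‖sgn x‖ = 1 := by unfold sgn; split <;> simp

lemma sgn_ii (c : ℂ) (a b : ℝ) :
    IntervalIntegrable (fun x => sgn x * Complex.exp (c * x)) volume a b := by
  rw [intervalIntegrable_iff]
  apply Integrable.mono' (g := fun x : ℝ => Real.exp (c.re * x))
  · exact (Real.continuous_exp.comp (continuous_const.mul continuous_id)).integrableOn_uIoc
  · exact ((sgn_meas.mul ((Complex.measurable_exp.comp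
      ((measurable_const.mul Complex.measurable_ofReal))))).aestronglyMeasurable)
  · filter_upwards with x
    rw [norm_mul, norm_sgn, one_mul, Complex.norm_exp]
    simp

lemma sgn_integral (c : ℂ) (hc : c ≠ 0) :
    ∫ x in (-Real.pi)..Real.pi, sgn x * Complex.exp (c * x)
      = (Complex.exp (Real.pi * c) + Complex.exp (-(Real.pi * c)) - 2) / c := by
  have hcongr1 : ∫ x in (-Real.pi)..(0:ℝ), sgn x * Complex.exp (c * x)
      = ∫ x in (-Real.pi)..(0:ℝ), -Complex.exp (c * x) := by
    apply intervalIntegral.integral_congr_ae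
    have h0 : ∀ᵐ x : ℝ, x ≠ (0:ℝ) := by
      refine (MeasureTheory.ae_iff).2 ?_
      simp only [not_not]
      rw [show {x : ℝ | x = 0} = {(0:ℝ)} from Set.setOf_eq_eq_singleton]
      exact Real.volume_singleton
    filter_upwards [h0] with x hx hmem
    rw [Set.uIoc_of_le (by simpa using Real.pi_pos.le : -Real.pi ≤ (0:ℝ))] at hmem
    have hlt : x < 0 := lt_of_le_of_ne hmem.2 hx
    simp [sgn, hlt]
  have h1 : ∫ x in (-Real.pi)..(0:ℝ), sgn x * Complex.exp (c * x)
      = -((Complex.exp (c * ((0:ℝ):ℂ)) - Complex.exp (c * ((-Real.pi : ℝ):ℂ))) / c) := by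
    rw [hcongr1, intervalIntegral.integral_neg, integral_exp_mul_complex hc]
  have h2 : ∫ x in (0:ℝ)..Real.pi, sgn x * Complex.exp (c * x)
      = (Complex.exp (c * ((Real.pi:ℝ):ℂ)) - Complex.exp (c * ((0:ℝ):ℂ))) / c := by
    rw [show (∫ x in (0:ℝ)..Real.pi, sgn x * Complex.exp (c * x))
        = ∫ x in (0:ℝ)..Real.pi, Complex.exp (c * x) from ?_]
    · exact integral_exp_mul_complex hc
    apply intervalIntegral.integral_congr
    intro x hx
    rw [Set.uIcc_of_le (by positivity : (0:ℝ) ≤ Real.pi)] at hx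
    have : ¬ x < 0 := not_lt.2 hx.1
    simp [sgn, this]
  rw [← intervalIntegral.integral_add_adjacent_intervals (sgn_ii c (-Real.pi) 0)
    (sgn_ii c 0 Real.pi), h1, h2]
  push_cast
  rw [show c * (0:ℂ) = 0 by ring, Complex.exp_zero,
    show c * -(Real.pi:ℂ) = -(Real.pi * c) by ring, show c * (Real.pi:ℂ) = Real.pi * c by ring]
  ring

lemma integral_real_exp (c : ℝ) (hc : c ≠ 0) (a b : ℝ) :
    ∫ x in a..b, Real.exp (c * x) = (Real.exp (c * b) - Real.exp (c * a)) / c := by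
  have h := integral_exp_mul_complex (c := (c:ℂ)) (by exact_mod_cast hc) (a := a) (b := b)
  have h2 : (∫ x in a..b, Complex.exp ((c:ℂ) * x))
      = ((∫ x in a..b, Real.exp (c * x) : ℝ) : ℂ) := by
    rw [← integral_ofReal]
    apply intervalIntegral.integral_congr
    intro x _
    simp only [Complex.ofReal_exp, Complex.ofReal_mul]
  rw [h2] at h
  have : ((∫ x in a..b, Real.exp (c * x) : ℝ) : ℂ)
      = (((Real.exp (c * b) - Real.exp (c * a)) / c : ℝ) : ℂ) := by
    rw [h]; simp only [Complex.ofReal_div, Complex.ofReal_sub, Complex.ofReal_exp,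
      Complex.ofReal_mul]
  exact_mod_cast this

lemma re_ii {f : ℝ → ℂ} {a b : ℝ} (h : IntervalIntegrable f volume a b) :
    IntervalIntegrable (fun x => (f x).re) volume a b := by
  rw [intervalIntegrable_iff] at h ⊢
  exact Complex.reCLM.integrable_comp h

lemma pointwise_eq (u v : ℝ) (a : ℂ) (x : ℝ) :
    ‖sgn x - a * Complex.exp (((u:ℂ) + v * Complex.I) * x)‖ ^ 2
      = 1 - 2 * ((starRingEnd ℂ) a * (sgn x * Complex.exp (((u:ℂ) - v * Complex.I) * x))).re
        + Complex.normSq a * Real.exp (2 * u * x) := by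
  rw [show ‖sgn x - a * Complex.exp (((u:ℂ) + v * Complex.I) * x)‖ ^ 2
      = Complex.normSq (sgn x - a * Complex.exp (((u:ℂ) + v * Complex.I) * x)) by
    rw [← Complex.sq_norm]]
  rw [Complex.normSq_sub]
  have h1 : Complex.normSq (sgn x) = 1 := by unfold sgn; split <;> simp
  have h2 : (starRingEnd ℂ) (a * Complex.exp (((u:ℂ) + v * Complex.I) * x))
      = (starRingEnd ℂ) a * Complex.exp (((u:ℂ) - v * Complex.I) * x) := by
    rw [map_mul, ← Complex.exp_conj]
    congr 2
    rw [map_mul, map_add, map_mul, Complex.conj_ofReal, Complex.conj_ofReal,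
      Complex.conj_ofReal, Complex.conj_I]
    ring
  have h3 : Complex.normSq (a * Complex.exp (((u:ℂ) + v * Complex.I) * x))
      = Complex.normSq a * Real.exp (2 * u * x) := by
    rw [Complex.normSq_mul, ← Complex.sq_norm (Complex.exp _), Complex.norm_exp]
    congr 1
    rw [← Real.exp_nat_mul]
    · congr 1
      simp [Complex.add_re, Complex.mul_re]
      ring
  rw [h1, h2, h3]
  ring_nf

lemma main_integral (u v : ℝ) (hu : u ≠ 0) (hμ : ((u:ℂ) - v * Complex.I) ≠ 0) (a : ℂ) :
    (∫ x in (-Real.pi)..Real.pi, ‖sgn x - a * Complex.exp (((u:ℂ) + v * Complex.I) * x)‖ ^ 2)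
      = 2 * Real.pi
        - 2 * ((starRingEnd ℂ) a *
            ((Complex.exp (Real.pi * ((u:ℂ) - v * Complex.I))
              + Complex.exp (-(Real.pi * ((u:ℂ) - v * Complex.I))) - 2)
              / ((u:ℂ) - v * Complex.I))).re
        + Complex.normSq a *
            ((Real.exp (2 * u * Real.pi) - Real.exp (2 * u * (-Real.pi))) / (2 * u)) := by
  set μ : ℂ := (u:ℂ) - v * Complex.I with hμdef
  have ibC : IntervalIntegrable (fun x : ℝ => (starRingEnd ℂ) a * (sgn x * Complex.exp (μ * x)))
      volume (-Real.pi) Real.pi := (sgn_ii μ (-Real.pi) Real.pi).const_mul _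
  have ib : IntervalIntegrable
      (fun x : ℝ => 2 * ((starRingEnd ℂ) a * (sgn x * Complex.exp (μ * x))).re)
      volume (-Real.pi) Real.pi := (re_ii ibC).const_mul 2
  have ic : IntervalIntegrable (fun x : ℝ => Complex.normSq a * Real.exp (2 * u * x))
      volume (-Real.pi) Real.pi :=
    ((Real.continuous_exp.comp (continuous_const.mul continuous_id)).intervalIntegrable
      _ _).const_mul _
  have ia : IntervalIntegrable (fun _ : ℝ => (1:ℝ)) volume (-Real.pi) Real.pi :=
    intervalIntegrable_const
  calc (∫ x in (-Real.pi)..Real.pi, ‖sgn x - a * Complex.exp (((u:ℂ) + v * Complex.I) * x)‖ ^ 2)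
      = ∫ x in (-Real.pi)..Real.pi,
          ((1 : ℝ) - 2 * ((starRingEnd ℂ) a * (sgn x * Complex.exp (μ * x))).re
            + Complex.normSq a * Real.exp (2 * u * x)) := by
        apply intervalIntegral.integral_congr
        intro x _
        exact pointwise_eq u v a x
    _ = ((∫ _x in (-Real.pi)..Real.pi, (1:ℝ))
          - ∫ x in (-Real.pi)..Real.pi,
              2 * ((starRingEnd ℂ) a * (sgn x * Complex.exp (μ * x))).re)
          + ∫ x in (-Real.pi)..Real.pi, Complex.normSq a * Real.exp (2 * u * x) := by
        rw [intervalIntegral.integral_add (ia.sub ib) ic, intervalIntegral.integral_sub ia ib]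
    _ = 2 * Real.pi
        - 2 * ((starRingEnd ℂ) a *
            ((Complex.exp (Real.pi * μ) + Complex.exp (-(Real.pi * μ)) - 2) / μ)).re
        + Complex.normSq a *
            ((Real.exp (2 * u * Real.pi) - Real.exp (2 * u * (-Real.pi))) / (2 * u)) := by
        congr 1
        · congr 1
          · simp; ring
          · rw [intervalIntegral.integral_const_mul]
            congr 1
            have : (∫ x in (-Real.pi)..Real.pi,
                ((starRingEnd ℂ) a * (sgn x * Complex.exp (μ * x))).re)
                = (∫ x in (-Real.pi)..Real.pi,
                    (starRingEnd ℂ) a * (sgn x * Complex.exp (μ * x))).re :=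
              Complex.reCLM.intervalIntegral_comp_comm ibC
            rw [this, intervalIntegral.integral_const_mul, sgn_integral μ hμ]
        · rw [intervalIntegral.integral_const_mul, integral_real_exp (2*u) (by simpa using hu)]

lemma normSq_K (u v : ℝ) (hu : u ≠ 0) :
    let μ : ℂ := (u:ℂ) - v * Complex.I
    let K : ℂ := (Complex.exp (Real.pi * μ) + Complex.exp (-(Real.pi * μ)) - 2) / μ
    (K.re ^ 2 + K.im ^ 2) * (u ^ 2 + v ^ 2)
      = 4 * (Real.cosh (Real.pi * u) - Real.cos (Real.pi * v)) ^ 2 := by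
  intro μ K
  have hμ2 : Complex.normSq μ = u ^ 2 + v ^ 2 := by
    simp [μ, Complex.normSq_apply]; ring
  have hμ : μ ≠ 0 := by
    intro h
    exact hu (by simpa [μ] using congrArg Complex.re h)
  have hK : K.re ^ 2 + K.im ^ 2 = Complex.normSq
      (Complex.exp (Real.pi * μ) + Complex.exp (-(Real.pi * μ)) - 2) / (u ^ 2 + v ^ 2) := by
    rw [show K.re ^ 2 + K.im ^ 2 = Complex.normSq K by rw [Complex.normSq_apply]; ring,
      show K = (Complex.exp (Real.pi * μ) + Complex.exp (-(Real.pi * μ)) - 2) / μ from rfl,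
      map_div₀, hμ2]
  rw [hK]
  rw [div_mul_cancel₀ _ (by positivity)]
  have hre : (Real.pi * μ : ℂ).re = Real.pi * u := by simp [μ]
  have him : (Real.pi * μ : ℂ).im = -(Real.pi * v) := by simp [μ]
  rw [Complex.normSq_apply]
  simp only [Complex.sub_re, Complex.add_re, Complex.sub_im, Complex.add_im,
    Complex.exp_re, Complex.exp_im, Complex.neg_re, Complex.neg_im, hre, him]
  rw [Real.cos_neg, Real.sin_neg, Real.cosh_eq]
  have hE : Real.exp (Real.pi * u) * Real.exp (-(Real.pi * u)) = 1 := by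
    rw [← Real.exp_add]; simp
  have hs : Real.sin (Real.pi * v) ^ 2 + Real.cos (Real.pi * v) ^ 2 = 1 :=
    Real.sin_sq_add_cos_sq _
  norm_num
  nlinarith [hE, hs, sq_nonneg (Real.exp (Real.pi * u) - Real.exp (-(Real.pi * u)))]

lemma key_id (P u v p q k1 k2 sh ch co : ℝ) (hP : P ≠ 0) (hu : u ≠ 0) (hsh : sh ≠ 0)
    (huv : u ^ 2 + v ^ 2 ≠ 0) (hN : (k1 ^ 2 + k2 ^ 2) * (u ^ 2 + v ^ 2) = 4 * (ch - co) ^ 2) :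
    (1 / (2 * P)) * (2 * P - 2 * (p * k1 + q * k2) + (p ^ 2 + q ^ 2) * (2 * sh / (2 * u)))
      = (1 - (2 * u / (u ^ 2 + v ^ 2)) * ((ch - co) ^ 2 / (P * sh)))
        + ((p * sh - u * k1) ^ 2 + (q * sh - u * k2) ^ 2) / (2 * P * u * sh) := by
  have hc : (ch - co) ^ 2 = (k1 ^ 2 + k2 ^ 2) * (u ^ 2 + v ^ 2) / 4 := by linarith
  rw [hc]
  field_simp
  ring

lemma E_eq (u v : ℝ) (hu : u ≠ 0) (a : ℂ) :
    (1 / (2 * Real.pi)) *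
      (∫ x in (-Real.pi)..Real.pi, ‖sgn x - a * Complex.exp (((u:ℂ) + v * Complex.I) * x)‖ ^ 2)
    = (1 - (2 * u / (u ^ 2 + v ^ 2)) *
        ((Real.cosh (Real.pi * u) - Real.cos (Real.pi * v)) ^ 2 /
          (Real.pi * Real.sinh (2 * Real.pi * u))))
      + ((a.re * Real.sinh (2 * Real.pi * u)
            - u * ((Complex.exp (Real.pi * ((u:ℂ) - v * Complex.I))
              + Complex.exp (-(Real.pi * ((u:ℂ) - v * Complex.I))) - 2)
              / ((u:ℂ) - v * Complex.I)).re) ^ 2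
        + (a.im * Real.sinh (2 * Real.pi * u)
            - u * ((Complex.exp (Real.pi * ((u:ℂ) - v * Complex.I))
              + Complex.exp (-(Real.pi * ((u:ℂ) - v * Complex.I))) - 2)
              / ((u:ℂ) - v * Complex.I)).im) ^ 2)
        / (2 * Real.pi * u * Real.sinh (2 * Real.pi * u)) := by
  have hμ : ((u:ℂ) - v * Complex.I) ≠ 0 := by
    intro h
    exact hu (by simpa using congrArg Complex.re h)
  have husg : 0 < u * Real.sinh (2 * Real.pi * u) := by
    rcases lt_or_gt_of_ne hu with h | h
    · have : Real.sinh (2 * Real.pi * u) < 0 := by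
        rw [← Real.sinh_zero]
        apply Real.sinh_lt_sinh.2
        nlinarith [Real.pi_pos]
      exact mul_pos_of_neg_of_neg h this
    · have : 0 < Real.sinh (2 * Real.pi * u) := by
        rw [Real.sinh_pos_iff]; nlinarith [Real.pi_pos]
      exact mul_pos h this
  have hsh : Real.sinh (2 * Real.pi * u) ≠ 0 := by
    intro h
    rw [h, mul_zero] at husg
    exact lt_irrefl 0 husg
  rw [main_integral u v hu hμ a]
  have hconj : ((starRingEnd ℂ) a *
      ((Complex.exp (Real.pi * ((u:ℂ) - v * Complex.I))
        + Complex.exp (-(Real.pi * ((u:ℂ) - v * Complex.I))) - 2)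
        / ((u:ℂ) - v * Complex.I))).re
      = a.re * ((Complex.exp (Real.pi * ((u:ℂ) - v * Complex.I))
        + Complex.exp (-(Real.pi * ((u:ℂ) - v * Complex.I))) - 2)
        / ((u:ℂ) - v * Complex.I)).re
        + a.im * ((Complex.exp (Real.pi * ((u:ℂ) - v * Complex.I))
        + Complex.exp (-(Real.pi * ((u:ℂ) - v * Complex.I))) - 2)
        / ((u:ℂ) - v * Complex.I)).im := by
    rw [Complex.mul_re, Complex.conj_re, Complex.conj_im]; ring
  have hns : Complex.normSq a = a.re ^ 2 + a.im ^ 2 := by rw [Complex.normSq_apply]; ring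
  have hexp : Real.exp (2 * u * Real.pi) - Real.exp (2 * u * (-Real.pi))
      = 2 * Real.sinh (2 * Real.pi * u) := by
    rw [Real.sinh_eq, show 2 * u * Real.pi = 2 * Real.pi * u by ring,
      show 2 * u * (-Real.pi) = -(2 * Real.pi * u) by ring]
    ring
  rw [hconj, hns, hexp]
  exact key_id Real.pi u v a.re a.im _ _ _ _ _ Real.pi_ne_zero hu hsh (by positivity)
    (normSq_K u v hu)

theorem one_freq_error_sign (u v : ℝ) (hu : u ≠ 0) (huv : (u, v) ≠ (0, 0)) :
    IsLeast
      {y : ℝ | ∃ a : ℂ,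
        y = (1 / (2 * Real.pi)) *
          ∫ x in (-Real.pi)..Real.pi,
            ‖sgn x - a * Complex.exp ((u + v * Complex.I) * x)‖ ^ 2}
      (1 - (2 * u / (u ^ 2 + v ^ 2)) *
        ((Real.cosh (Real.pi * u) - Real.cos (Real.pi * v)) ^ 2 /
          (Real.pi * Real.sinh (2 * Real.pi * u)))) := by
  set sh := Real.sinh (2 * Real.pi * u) with hshdef
  have husg : 0 < u * sh := by
    rcases lt_or_gt_of_ne hu with h | h
    · have : sh < 0 := by
        rw [hshdef, ← Real.sinh_zero]
        apply Real.sinh_lt_sinh.2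
        nlinarith [Real.pi_pos]
      exact mul_pos_of_neg_of_neg h this
    · have : 0 < sh := by
        rw [hshdef, Real.sinh_pos_iff]; nlinarith [Real.pi_pos]
      exact mul_pos h this
  have hsh : sh ≠ 0 := by
    intro h
    rw [h, mul_zero] at husg
    exact lt_irrefl 0 husg
  set K : ℂ := (Complex.exp (Real.pi * ((u:ℂ) - v * Complex.I))
      + Complex.exp (-(Real.pi * ((u:ℂ) - v * Complex.I))) - 2)
      / ((u:ℂ) - v * Complex.I) with hKdef
  constructor
  · refine ⟨((u / sh : ℝ) : ℂ) * K, ?_⟩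
    rw [E_eq u v hu _]
    have h1 : ((((u / sh : ℝ) : ℂ) * K).re * sh - u * K.re) = 0 := by
      rw [Complex.re_ofReal_mul]; field_simp; ring
    have h2 : ((((u / sh : ℝ) : ℂ) * K).im * sh - u * K.im) = 0 := by
      rw [Complex.im_ofReal_mul]; field_simp; ring
    rw [← hshdef, ← hKdef, h1, h2]
    norm_num
  · rintro y ⟨a, rfl⟩
    rw [E_eq u v hu a, ← hshdef, ← hKdef]
    have hden : 0 ≤ 2 * Real.pi * u * sh := by nlinarith [Real.pi_pos]
    exact le_add_of_nonneg_right (div_nonneg (by positivity) hden)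
end

section
/- There exists a unique real number v₀ in the open interval (0.1, 0.9) satisfying sin(πv₀)·πv₀ + cos(πv₀) = 1, and v₀ ∈ (0.74, 0.75). -/
open Real

noncomputable def fcp : ℝ → ℝ := fun v => Real.sin (Real.pi * v) * (Real.pi * v) + Real.cos (Real.pi * v)

lemma fcp_hasDerivAt (v : ℝ) :
    HasDerivAt fcp (Real.pi ^ 2 * v * Real.cos (Real.pi * v)) v := by
  have h1 : HasDerivAt (fun v : ℝ => Real.pi * v) Real.pi v := by
    simpa using (hasDerivAt_id v).const_mul Real.pi
  have hs : HasDerivAt (fun v : ℝ => Real.sin (Real.pi * v))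
      (Real.cos (Real.pi * v) * Real.pi) v := (Real.hasDerivAt_sin _).comp v h1
  have hc : HasDerivAt (fun v : ℝ => Real.cos (Real.pi * v))
      (-Real.sin (Real.pi * v) * Real.pi) v := (Real.hasDerivAt_cos _).comp v h1
  have := (hs.mul h1).add hc
  refine this.congr_deriv ?_
  ring

lemma fcp_cont : Continuous fcp := by
  unfold fcp; fun_prop

lemma fcp_anti : StrictAntiOn fcp (Set.Icc (0.5 : ℝ) 0.9) := by
  apply strictAntiOn_of_deriv_neg (convex_Icc _ _) fcp_cont.continuousOn
  intro x hx
  rw [interior_Icc] at hx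
  rw [(fcp_hasDerivAt x).deriv]
  have hpi := Real.pi_gt_three
  have hx1 : Real.pi / 2 < Real.pi * x := by nlinarith [hx.1]
  have hx2 : Real.pi * x < Real.pi + Real.pi / 2 := by nlinarith [hx.2]
  have hcos : Real.cos (Real.pi * x) < 0 := Real.cos_neg_of_pi_div_two_lt_of_lt hx1 hx2
  have hx0 : (0:ℝ) < x := by linarith [hx.1]
  have hp2 : (0:ℝ) < Real.pi ^ 2 * x := by positivity
  exact mul_neg_of_pos_of_neg hp2 hcos

lemma fcp_low {v : ℝ} (h0 : 0 < v) (h5 : v ≤ 0.5) : 1 < fcp v := by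
  have hpi := Real.pi_pos
  set t := Real.pi * v / 2 with ht
  have h2t : Real.pi * v = 2 * t := by rw [ht]; ring
  have ht0 : 0 < t := by positivity
  have htpi4 : t ≤ Real.pi / 4 := by rw [ht]; nlinarith
  have hs : 0 < Real.sin t := Real.sin_pos_of_pos_of_lt_pi ht0 (by nlinarith)
  have hslt : Real.sin t < t := Real.sin_lt ht0
  have hc : Real.cos (Real.pi / 4) ≤ Real.cos t :=
    Real.cos_le_cos_of_nonneg_of_le_pi ht0.le (by nlinarith) htpi4
  have hc4 : Real.cos (Real.pi / 4) = Real.sqrt 2 / 2 := Real.cos_pi_div_four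
  have hsqrt2 : (1.4 : ℝ) < Real.sqrt 2 := by
    nlinarith [Real.sq_sqrt (by norm_num : (2:ℝ) ≥ 0), Real.sqrt_nonneg 2]
  have hchalf : (1/2 : ℝ) < Real.cos t := by rw [hc4] at hc; linarith
  unfold fcp
  rw [h2t, Real.sin_two_mul, Real.cos_two_mul]
  have hsq : Real.sin t ^ 2 + Real.cos t ^ 2 = 1 := Real.sin_sq_add_cos_sq t
  nlinarith [hsq, mul_pos hs (show 0 < 2 * t * Real.cos t - Real.sin t by nlinarith)]

lemma fcp_75 : fcp 0.75 < 1 := by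
  have h34 : Real.pi * (0.75 : ℝ) = Real.pi - Real.pi / 4 := by ring
  have hs : Real.sin (Real.pi * 0.75) = Real.sqrt 2 / 2 := by
    rw [h34, Real.sin_pi_sub, Real.sin_pi_div_four]
  have hc : Real.cos (Real.pi * 0.75) = -(Real.sqrt 2 / 2) := by
    rw [h34, Real.cos_pi_sub, Real.cos_pi_div_four]
  have hpi : Real.pi < 3.15 := by linarith [Real.pi_lt_d2]
  have hsqrt2 : Real.sqrt 2 < 1.415 := by
    nlinarith [Real.sq_sqrt (by norm_num : (2:ℝ) ≥ 0), Real.sqrt_nonneg 2]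
  have hsqrt2' : (0:ℝ) ≤ Real.sqrt 2 := Real.sqrt_nonneg 2
  unfold fcp
  rw [hs, hc]
  nlinarith [Real.pi_gt_three]

set_option maxHeartbeats 800000 in
lemma fcp_74 : 1 < fcp 0.74 := by
  have hpil : (3.141592 : ℝ) < Real.pi := by linarith [Real.pi_gt_d6]
  have hpiu : Real.pi < 3.141593 := by linarith [Real.pi_lt_d6]
  have hyl : (0.3769 : ℝ) < 0.12 * Real.pi := by linarith
  have hyu : (0.12 : ℝ) * Real.pi < 0.3770 := by linarith
  set y : ℝ := 0.12 * Real.pi with hy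
  have hy1 : |y| ≤ 1 := by rw [abs_of_pos (by linarith)]; linarith
  have hsb := Real.sin_bound hy1
  have hcb := Real.cos_bound hy1
  rw [abs_of_pos (by linarith : (0:ℝ) < y)] at hsb hcb
  rw [abs_le] at hsb hcb
  have hy2u : y ^ 2 < 0.14213 := by nlinarith
  have hy2l : (0.14205 : ℝ) < y ^ 2 := by nlinarith
  have hy3u : y ^ 3 < 0.0536 := by nlinarith
  have hy3l : (0.05353 : ℝ) < y ^ 3 := by nlinarith
  have hy4u : y ^ 4 < 0.020203 := by nlinarith
  have hsu : Real.sin y < 0.36914 := by nlinarith [hsb.2, hy4u, hyu]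
  have hsl : (0.3669 : ℝ) < Real.sin y := by nlinarith [hsb.1, sq_nonneg (y^2)]
  have hcu : Real.cos y < 0.93003 := by linarith [hcb.2]
  have hcl : (0.927 : ℝ) < Real.cos y := by linarith [hcb.1]
  have hsq : Real.sin y ^ 2 + Real.cos y ^ 2 = 1 := Real.sin_sq_add_cos_sq y
  have h2y : Real.pi * (0.74 : ℝ) = Real.pi / 2 + 2 * y := by rw [hy]; ring
  have hs : Real.sin (Real.pi * 0.74) = Real.cos (2 * y) := by
    rw [h2y, Real.sin_add, Real.sin_pi_div_two, Real.cos_pi_div_two]; ring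
  have hc : Real.cos (Real.pi * 0.74) = -Real.sin (2 * y) := by
    rw [h2y, Real.cos_add, Real.sin_pi_div_two, Real.cos_pi_div_two]; ring
  have hcos2 : Real.cos (2 * y) = 1 - 2 * Real.sin y ^ 2 := by
    rw [Real.cos_two_mul]; linear_combination 2 * hsq
  unfold fcp
  rw [hs, hc, hcos2, Real.sin_two_mul]
  have hs2 : Real.sin y ^ 2 < 0.13627 := by nlinarith
  have hsc : Real.sin y * Real.cos y < 0.34335 := by nlinarith
  have hp : (2.3247 : ℝ) < Real.pi * 0.74 := by linarith
  have h1 : (0.72746 : ℝ) < 1 - 2 * Real.sin y ^ 2 := by linarith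
  nlinarith [mul_pos (show (0:ℝ) < 1 - 2 * Real.sin y ^ 2 by linarith)
    (show (0:ℝ) < Real.pi * 0.74 by linarith)]

theorem critical_point_exists_unique :
    (∃! v₀ : ℝ, v₀ ∈ Set.Ioo (0.1 : ℝ) 0.9 ∧
        Real.sin (Real.pi * v₀) * (Real.pi * v₀) + Real.cos (Real.pi * v₀) = 1) ∧
      ∀ v₀ : ℝ, v₀ ∈ Set.Ioo (0.1 : ℝ) 0.9 →
        Real.sin (Real.pi * v₀) * (Real.pi * v₀) + Real.cos (Real.pi * v₀) = 1 →
        v₀ ∈ Set.Ioo (0.74 : ℝ) 0.75 := by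
  have h74 := fcp_74
  have h75 := fcp_75
  have key : ∀ v : ℝ, v ∈ Set.Ioo (0.1 : ℝ) 0.9 → fcp v = 1 → v ∈ Set.Ioo (0.74 : ℝ) 0.75 := by
    intro v hv hfv
    obtain ⟨hv1, hv2⟩ := hv
    have hv5 : (0.5 : ℝ) < v := by
      by_contra h
      push_neg at h
      have := fcp_low (by linarith : (0:ℝ) < v) h
      linarith
    constructor
    · by_contra h
      push_neg at h
      rcases eq_or_lt_of_le h with he | hlt
      · rw [← he] at h74; linarith
      · have := fcp_anti (Set.mem_Icc.2 ⟨hv5.le, by linarith⟩)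
          (Set.mem_Icc.2 ⟨by norm_num, by norm_num⟩) hlt
        linarith
    · by_contra h
      push_neg at h
      rcases eq_or_lt_of_le h with he | hlt
      · rw [he] at h75; linarith
      · have := fcp_anti (Set.mem_Icc.2 ⟨by norm_num, by norm_num⟩)
          (Set.mem_Icc.2 ⟨by linarith, by linarith⟩) hlt
        linarith
  have hex : ∃ v ∈ Set.Ioo (0.74 : ℝ) 0.75, fcp v = 1 := by
    have hsub := intermediate_value_Ioo' (by norm_num : (0.74:ℝ) ≤ 0.75)
      fcp_cont.continuousOn (f := fcp)
    obtain ⟨v, hv, hfv⟩ := hsub ⟨h75, h74⟩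
    exact ⟨v, hv, hfv⟩
  obtain ⟨v, hv, hfv⟩ := hex
  constructor
  · refine ⟨v, ⟨⟨by linarith [hv.1], by linarith [hv.2]⟩, hfv⟩, ?_⟩
    intro w hw
    obtain ⟨hwmem, hfw⟩ := hw
    have hfw' : fcp w = 1 := hfw
    have hw' := key w hwmem hfw'
    have hwIcc : w ∈ Set.Icc (0.5:ℝ) 0.9 := ⟨by linarith [hw'.1], by linarith [hw'.2]⟩
    have hvIcc : v ∈ Set.Icc (0.5:ℝ) 0.9 := ⟨by linarith [hv.1], by linarith [hv.2]⟩
    exact fcp_anti.injOn hwIcc hvIcc (hfw'.trans hfv.symm)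
  · intro w hw hfw
    exact key w hw hfw
end

section
/- The function ψ(v) = 1 − (1 − cos(πv))²/(π²v²) for v ≠ 0 (extended by ψ(0) = 1) is even, satisfies 0 ≤ ψ(v) ≤ 1 for all real v, and attains its global minimum exactly at v = ±v₀, where v₀ ∈ (0,1) is the unique positive solution of sin(πv)πv + cos(πv) = 1 in (0,1). -/
open Real

/-- The one-frequency purely imaginary approximation error for sign(x),
extended by ψ(0) = 1. -/
noncomputable def psi (v : ℝ) : ℝ :=
  if v = 0 then 1 else 1 - (1 - Real.cos (Real.pi * v)) ^ 2 / (Real.pi ^ 2 * v ^ 2)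

/-- Auxiliary: the quantity ψ = 1 - Fn. -/
noncomputable def Fn (v : ℝ) : ℝ := (1 - Real.cos (Real.pi * v)) ^ 2 / (Real.pi ^ 2 * v ^ 2)

lemma psi_eq (v : ℝ) : psi v = 1 - Fn v := by
  unfold psi Fn
  by_cases hv : v = 0
  · simp [hv]
  · simp [hv]

lemma Fn_even (v : ℝ) : Fn (-v) = Fn v := by
  unfold Fn
  rw [mul_neg, Real.cos_neg]
  congr 1
  ring

lemma Fn_nonneg (v : ℝ) : 0 ≤ Fn v := by
  unfold Fn
  positivity

lemma one_sub_cos_nonneg (t : ℝ) : 0 ≤ 1 - Real.cos t := by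
  nlinarith [Real.cos_le_one t]

lemma sq_one_sub_cos_le (t : ℝ) : (1 - Real.cos t) ^ 2 ≤ t ^ 2 := by
  have h1 : 1 - Real.cos t = 2 * Real.sin (t / 2) ^ 2 := by
    have h := Real.cos_two_mul (t / 2)
    have h2 := Real.sin_sq_add_cos_sq (t / 2)
    have ht : 2 * (t / 2) = t := by ring
    rw [ht] at h
    linarith
  have h2 : |Real.sin (t / 2)| ≤ |t / 2| := Real.abs_sin_le_abs
  have h3 : |Real.sin (t / 2)| ≤ 1 := Real.abs_sin_le_one _
  have h4 : Real.sin (t / 2) ^ 2 = |Real.sin (t / 2)| ^ 2 := (sq_abs _).symm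
  have h5 : 1 - Real.cos t ≤ |t| := by
    rw [h1, h4]
    have : |t / 2| = |t| / 2 := by rw [abs_div]; norm_num
    nlinarith [abs_nonneg (Real.sin (t / 2)), abs_nonneg t]
  have h6 : 0 ≤ 1 - Real.cos t := one_sub_cos_nonneg t
  calc (1 - Real.cos t) ^ 2 ≤ |t| ^ 2 := by nlinarith [abs_nonneg t]
    _ = t ^ 2 := sq_abs t

lemma Fn_le_one (v : ℝ) : Fn v ≤ 1 := by
  unfold Fn
  by_cases hv : v = 0
  · simp [hv]
  · rw [div_le_one (by positivity)]
    have := sq_one_sub_cos_le (Real.pi * v)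
    calc (1 - Real.cos (Real.pi * v)) ^ 2 ≤ (Real.pi * v) ^ 2 := this
      _ = Real.pi ^ 2 * v ^ 2 := by ring

lemma Fn_zero : Fn 0 = 0 := by simp [Fn]

lemma Fn_quad_bound (v : ℝ) : Fn v ≤ Real.pi ^ 2 * v ^ 2 / 4 := by
  unfold Fn
  by_cases hv : v = 0
  · simp [hv]
  · rw [div_le_iff₀ (by positivity)]
    have h1 : 1 - Real.cos (Real.pi * v) ≤ (Real.pi * v) ^ 2 / 2 := by
      have := Real.one_sub_sq_div_two_le_cos (x := Real.pi * v)
      linarith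
    have h2 : 0 ≤ 1 - Real.cos (Real.pi * v) := one_sub_cos_nonneg _
    nlinarith [sq_nonneg (Real.pi * v)]

lemma Fn_continuous : Continuous Fn := by
  rw [continuous_iff_continuousAt]
  intro v
  by_cases hv : v = 0
  · subst hv
    have key : Filter.Tendsto Fn (nhds 0) (nhds 0) := by
      apply squeeze_zero Fn_nonneg Fn_quad_bound
      have : Continuous fun v : ℝ => Real.pi ^ 2 * v ^ 2 / 4 := by continuity
      have h := this.tendsto 0
      simpa using h
    simpa [ContinuousAt, Fn_zero] using key
  · apply ContinuousAt.div
    · fun_prop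
    · fun_prop
    · positivity

lemma Fn_hasDerivAt (v : ℝ) (hv : v ≠ 0) :
    HasDerivAt Fn ((2 * (1 - Real.cos (Real.pi * v)) * (Real.pi * Real.sin (Real.pi * v)) *
      (Real.pi ^ 2 * v ^ 2) - (1 - Real.cos (Real.pi * v)) ^ 2 * (Real.pi ^ 2 * (2 * v))) /
      (Real.pi ^ 2 * v ^ 2) ^ 2) v := by
  have hcos : HasDerivAt (fun v : ℝ => Real.cos (Real.pi * v))
      (-Real.sin (Real.pi * v) * Real.pi) v := by
    have h1 : HasDerivAt (fun v : ℝ => Real.pi * v) Real.pi v := by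
      simpa using (hasDerivAt_id v).const_mul Real.pi
    exact (Real.hasDerivAt_cos (Real.pi * v)).comp v h1
  have hnum : HasDerivAt (fun v : ℝ => (1 - Real.cos (Real.pi * v)) ^ 2)
      (2 * (1 - Real.cos (Real.pi * v)) * (Real.pi * Real.sin (Real.pi * v))) v := by
    have h2 : HasDerivAt (fun v : ℝ => 1 - Real.cos (Real.pi * v))
        (Real.pi * Real.sin (Real.pi * v)) v := by
      simpa [neg_mul, mul_comm] using hcos.const_sub 1
    have h3 := h2.fun_pow 2
    simpa [mul_comm, mul_assoc, mul_left_comm] using h3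
  have hden : HasDerivAt (fun v : ℝ => Real.pi ^ 2 * v ^ 2) (Real.pi ^ 2 * (2 * v)) v := by
    have h4 : HasDerivAt (fun v : ℝ => v ^ 2) (2 * v) v := by
      simpa using hasDerivAt_pow 2 v
    simpa using h4.const_mul (Real.pi ^ 2)
  exact hnum.div hden (by positivity)

lemma critical_eq {c : ℝ} (hc : c ∈ Set.Ioo (0 : ℝ) 1) (hmax : IsLocalMax Fn c) :
    Real.sin (Real.pi * c) * (Real.pi * c) + Real.cos (Real.pi * c) = 1 := by
  obtain ⟨hc0, hc1⟩ := hc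
  have hd := Fn_hasDerivAt c (ne_of_gt hc0)
  have hz : deriv Fn c = 0 := hmax.deriv_eq_zero
  rw [hd.deriv] at hz
  have hden : (0 : ℝ) < (Real.pi ^ 2 * c ^ 2) ^ 2 := by positivity
  have hnum : 2 * (1 - Real.cos (Real.pi * c)) * (Real.pi * Real.sin (Real.pi * c)) *
      (Real.pi ^ 2 * c ^ 2) - (1 - Real.cos (Real.pi * c)) ^ 2 * (Real.pi ^ 2 * (2 * c)) = 0 := by
    field_simp at hz
    linear_combination (Real.pi ^ 2 * c) * hz
  have hA : 0 < 1 - Real.cos (Real.pi * c) := by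
    have : Real.cos (Real.pi * c) < Real.cos 0 := by
      apply Real.cos_lt_cos_of_nonneg_of_le_pi le_rfl
      · nlinarith [Real.pi_pos]
      · positivity
    simp at this; linarith
  have hfac : (2 * Real.pi ^ 2 * c * (1 - Real.cos (Real.pi * c))) *
      (Real.pi * c * Real.sin (Real.pi * c) - (1 - Real.cos (Real.pi * c))) = 0 := by
    linear_combination hnum
  rcases mul_eq_zero.mp hfac with h | h
  · exfalso
    have : 0 < 2 * Real.pi ^ 2 * c * (1 - Real.cos (Real.pi * c)) := by positivity
    linarith
  · nlinarith [h]

lemma Fn_special : 4 / Real.pi ^ 2 < Fn ((Real.pi - 1) / Real.pi) := by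
  have hpi := Real.pi_gt_three
  have hpi4 := Real.pi_lt_d2
  have hppos := Real.pi_pos
  have hx : Real.pi * ((Real.pi - 1) / Real.pi) = Real.pi - 1 := by
    field_simp
  unfold Fn
  rw [hx]
  have hcos : Real.cos (Real.pi - 1) = -Real.cos 1 := by
    rw [Real.cos_pi_sub]
  rw [hcos]
  have hc1 : (1 : ℝ) / 2 ≤ Real.cos 1 := by
    have := Real.one_sub_sq_div_two_le_cos (x := 1)
    norm_num at this
    linarith
  have hc2 : Real.cos 1 ≤ 1 := Real.cos_le_one 1
  have hden : Real.pi ^ 2 * ((Real.pi - 1) / Real.pi) ^ 2 = (Real.pi - 1) ^ 2 := by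
    field_simp
  rw [hden]
  rw [div_lt_div_iff₀ (by positivity) (by nlinarith)]
  nlinarith [mul_pos (show (0:ℝ) < 3.15 - Real.pi by linarith)
    (show (0:ℝ) < Real.pi - 1 by linarith), sq_nonneg (Real.cos 1 - 1/2),
    mul_nonneg (sq_nonneg Real.pi) (show (0:ℝ) ≤ Real.cos 1 - 1/2 by linarith)]
lemma Fn_one : Fn 1 = 4 / Real.pi ^ 2 := by
  unfold Fn
  simp [Real.cos_pi]
  norm_num

lemma Fn_ge_one_bound {v : ℝ} (hv : 1 ≤ v) : Fn v ≤ 4 / Real.pi ^ 2 := by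
  unfold Fn
  have h1 : (1 - Real.cos (Real.pi * v)) ^ 2 ≤ 4 := by
    have := Real.neg_one_le_cos (Real.pi * v)
    have := Real.cos_le_one (Real.pi * v)
    nlinarith
  have hv2 : (1:ℝ) ≤ v ^ 2 := by nlinarith
  have h2 : Real.pi ^ 2 ≤ Real.pi ^ 2 * v ^ 2 := by
    nlinarith [mul_nonneg (sq_nonneg Real.pi) (sub_nonneg.mpr hv2)]
  calc (1 - Real.cos (Real.pi * v)) ^ 2 / (Real.pi ^ 2 * v ^ 2)
      ≤ 4 / (Real.pi ^ 2 * v ^ 2) := by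
        apply div_le_div_of_nonneg_right h1 (by nlinarith [Real.pi_pos]) |>.trans le_rfl
    _ ≤ 4 / Real.pi ^ 2 := by
        apply div_le_div_of_nonneg_left (by norm_num) (by positivity) h2

theorem psi_properties (v₀ : ℝ) (hv₀ : v₀ ∈ Set.Ioo (0 : ℝ) 1)
    (heq : Real.sin (Real.pi * v₀) * (Real.pi * v₀) + Real.cos (Real.pi * v₀) = 1)
    (huniq : ∀ w ∈ Set.Ioo (0 : ℝ) 1,
      Real.sin (Real.pi * w) * (Real.pi * w) + Real.cos (Real.pi * w) = 1 → w = v₀) :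
    (∀ v : ℝ, psi (-v) = psi v) ∧
      (∀ v : ℝ, 0 ≤ psi v ∧ psi v ≤ 1) ∧
      (∀ v : ℝ, psi v₀ ≤ psi v) ∧
      (∀ v : ℝ, psi v = psi v₀ → v = v₀ ∨ v = -v₀) := by
  have hppos := Real.pi_pos
  -- extreme value theorem on [0,1]
  obtain ⟨c, hcmem, hcmax⟩ := (isCompact_Icc (a := (0:ℝ)) (b := 1)).exists_isMaxOn
    ⟨0, by norm_num⟩ Fn_continuous.continuousOn
  have hspmem : (Real.pi - 1) / Real.pi ∈ Set.Icc (0 : ℝ) 1 := by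
    constructor
    · apply div_nonneg (by linarith [Real.pi_gt_three]) hppos.le
    · rw [div_le_one hppos]; linarith
  have hcbig : 4 / Real.pi ^ 2 < Fn c :=
    lt_of_lt_of_le Fn_special (hcmax hspmem)
  have hc0 : c ≠ 0 := by
    intro h; rw [h, Fn_zero] at hcbig
    have : (0:ℝ) < 4 / Real.pi ^ 2 := by positivity
    linarith
  have hc1 : c ≠ 1 := by
    intro h; rw [h, Fn_one] at hcbig; linarith
  have hcIoo : c ∈ Set.Ioo (0 : ℝ) 1 :=
    ⟨lt_of_le_of_ne hcmem.1 (Ne.symm hc0), lt_of_le_of_ne hcmem.2 hc1⟩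
  have hclocal : IsLocalMax Fn c :=
    hcmax.isLocalMax (Icc_mem_nhds hcIoo.1 hcIoo.2)
  have hcv₀ : c = v₀ := huniq c hcIoo (critical_eq hcIoo hclocal)
  subst hcv₀
  -- so Fn v₀ is the max on [0,1] and Fn v₀ > 4/π²
  -- strict maximality
  have hstrict : ∀ v : ℝ, v ≠ c → v ≠ -c → Fn v < Fn c := by
    intro v hv1 hv2
    have habs : Fn |v| = Fn v := by
      rcases abs_choice v with h | h
      · rw [h]
      · rw [h, Fn_even]
    rw [← habs]
    rcases le_or_gt 1 |v| with hge | hlt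
    · exact lt_of_le_of_lt (Fn_ge_one_bound hge) hcbig
    · have hmem : |v| ∈ Set.Icc (0 : ℝ) 1 := ⟨abs_nonneg v, hlt.le⟩
      have hle : Fn |v| ≤ Fn c := hcmax hmem
      rcases lt_or_eq_of_le hle with h | h
      · exact h
      · exfalso
        -- |v| also attains the max, so it's a critical point, so |v| = c
        have hv0 : |v| ≠ 0 := by
          intro hz; rw [hz, Fn_zero] at h
          have hpos : (0:ℝ) < 4 / Real.pi ^ 2 := by positivity
          rw [← h] at hcbig; linarith
        have hvne1 : |v| ≠ 1 := by
          intro hz; rw [hz, Fn_one] at h; rw [← h] at hcbig; linarith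
        have hvIoo : |v| ∈ Set.Ioo (0 : ℝ) 1 :=
          ⟨lt_of_le_of_ne (abs_nonneg v) (Ne.symm hv0), lt_of_le_of_ne hlt.le hvne1⟩
        have hvmax : IsMaxOn Fn (Set.Icc (0:ℝ) 1) |v| := by
          intro x hx
          have := hcmax hx
          simp only [Set.mem_setOf_eq] at this ⊢
          rw [h]; exact this
        have hvlocal : IsLocalMax Fn |v| :=
          hvmax.isLocalMax (Icc_mem_nhds hvIoo.1 hvIoo.2)
        have : |v| = c := huniq _ hvIoo (critical_eq hvIoo hvlocal)
        rcases abs_choice v with hh | hh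
        · exact hv1 (hh ▸ this)
        · apply hv2; rw [← this, hh]; ring
  refine ⟨?_, ?_, ?_, ?_⟩
  · intro v; rw [psi_eq, psi_eq, Fn_even]
  · intro v
    rw [psi_eq]
    constructor
    · linarith [Fn_le_one v]
    · linarith [Fn_nonneg v]
  · intro v
    rw [psi_eq, psi_eq]
    rcases eq_or_ne v c with h | h
    · rw [h]
    rcases eq_or_ne v (-c) with h2 | h2
    · rw [h2, Fn_even]
    · linarith [hstrict v h h2]
  · intro v hv
    by_contra hcon
    push_neg at hcon
    obtain ⟨h1, h2⟩ := hcon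
    have := hstrict v h1 h2
    rw [psi_eq, psi_eq] at hv
    linarith
end

section
/- Let f(x) = sign(x) on [-π,π]. The minimum over a, b ∈ ℂ of ‖f − a·1 − b·x‖² (approximation by the expo-polynomials e^{0·x} = 1 and x·e^{0·x} = x) equals 1/4. -/
open MeasureTheory Complex

lemma int_poly (p q r A B : ℝ) :
    ∫ x in A..B, (p + q * x + r * x ^ 2) =
      p * (B - A) + q * (B ^ 2 - A ^ 2) / 2 + r * (B ^ 3 - A ^ 3) / 3 := by
  have h : ∀ x ∈ Set.uIcc A B,
      HasDerivAt (fun x => p * x + q * x ^ 2 / 2 + r * x ^ 3 / 3)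
        (p + q * x + r * x ^ 2) x := by
    intro x _
    have h1 : HasDerivAt (fun x : ℝ => p * x + q * x ^ 2 / 2 + r * x ^ 3 / 3)
        (p * 1 + q * (2 * x ^ 1) / 2 + r * (3 * x ^ 2) / 3) x :=
      (((hasDerivAt_id x).const_mul p).add
        (((hasDerivAt_pow 2 x).const_mul q).div_const 2)).add
        (((hasDerivAt_pow 3 x).const_mul r).div_const 3)
    convert h1 using 1
    ring
  have hc : ContinuousOn (fun x : ℝ => p + q * x + r * x ^ 2) (Set.uIcc A B) := by
    fun_prop
  rw [intervalIntegral.integral_eq_sub_of_hasDerivAt h hc.intervalIntegrable]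
  ring

lemma norm_sq_eval (c b : ℂ) (x : ℝ) :
    ‖c - b * x‖ ^ 2 =
      (c.re ^ 2 + c.im ^ 2) + (-2 * (c.re * b.re + c.im * b.im)) * x
        + (b.re ^ 2 + b.im ^ 2) * x ^ 2 := by
  rw [Complex.sq_norm]
  simp [Complex.normSq_apply, Complex.sub_re, Complex.sub_im, Complex.mul_re,
    Complex.mul_im, Complex.ofReal_re, Complex.ofReal_im]
  ring

lemma quad_int (c b : ℂ) (A B : ℝ) :
    ∫ x in A..B, ‖c - b * x‖ ^ 2 =
      (c.re ^ 2 + c.im ^ 2) * (B - A)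
        + (-2 * (c.re * b.re + c.im * b.im)) * (B ^ 2 - A ^ 2) / 2
        + (b.re ^ 2 + b.im ^ 2) * (B ^ 3 - A ^ 3) / 3 := by
  rw [intervalIntegral.integral_congr (g := fun x =>
      (c.re ^ 2 + c.im ^ 2) + (-2 * (c.re * b.re + c.im * b.im)) * x
        + (b.re ^ 2 + b.im ^ 2) * x ^ 2)
    (fun x _ => norm_sq_eval c b x)]
  exact int_poly _ _ _ A B

lemma quad_integrable (c b : ℂ) (A B : ℝ) :
    IntervalIntegrable (fun x : ℝ => ‖c - b * x‖ ^ 2) volume A B := by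
  apply Continuous.intervalIntegrable
  fun_prop

lemma eval (a b : ℂ) :
    (1 / (2 * Real.pi)) * ∫ x in (-Real.pi)..Real.pi, ‖sgn x - a - b * x‖ ^ 2
      = 1 + (a.re ^ 2 + a.im ^ 2)
        + (b.re ^ 2 + b.im ^ 2) * Real.pi ^ 2 / 3 - Real.pi * b.re := by
  have hpi := Real.pi_pos
  have h0 : ∀ᵐ x : ℝ, x ≠ 0 := by
    have h1 : (volume : Measure ℝ) {(0 : ℝ)} = 0 := measure_singleton 0
    exact ae_iff.2 (by simpa using h1)
  have hnegeq : (fun x : ℝ => ‖sgn x - a - b * x‖ ^ 2)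
      =ᵐ[volume.restrict (Set.uIoc (-Real.pi) 0)]
      (fun x : ℝ => ‖(-1 - a) - b * x‖ ^ 2) := by
    filter_upwards [ae_restrict_mem measurableSet_uIoc, ae_restrict_of_ae h0]
      with x hxI hx
    have hx' : x ∈ Set.Ioc (-Real.pi) (0 : ℝ) := by
      simpa [Set.uIoc_of_le (by linarith : -Real.pi ≤ (0:ℝ))] using hxI
    have hxlt : x < 0 := lt_of_le_of_ne hx'.2 hx
    simp [sgn, hxlt, sub_sub]
  have hposeq : (fun x : ℝ => ‖sgn x - a - b * x‖ ^ 2)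
      =ᵐ[volume.restrict (Set.uIoc (0 : ℝ) Real.pi)]
      (fun x : ℝ => ‖(1 - a) - b * x‖ ^ 2) := by
    filter_upwards [ae_restrict_mem measurableSet_uIoc] with x hxI
    have hx' : x ∈ Set.Ioc (0 : ℝ) Real.pi := by
      simpa [Set.uIoc_of_le hpi.le] using hxI
    simp [sgn, not_lt.2 hx'.1.le, sub_sub]
  have hintneg : IntervalIntegrable (fun x : ℝ => ‖sgn x - a - b * x‖ ^ 2)
      volume (-Real.pi) 0 :=
    (quad_integrable (-1 - a) b (-Real.pi) 0).congr_ae hnegeq.symm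
  have hintpos : IntervalIntegrable (fun x : ℝ => ‖sgn x - a - b * x‖ ^ 2)
      volume 0 Real.pi :=
    (quad_integrable (1 - a) b 0 Real.pi).congr_ae hposeq.symm
  rw [← intervalIntegral.integral_add_adjacent_intervals hintneg hintpos,
    intervalIntegral.integral_congr_ae (ae_imp_of_ae_restrict hnegeq),
    intervalIntegral.integral_congr_ae (ae_imp_of_ae_restrict hposeq),
    quad_int, quad_int]
  have hpi' : Real.pi ≠ 0 := hpi.ne'
  simp only [Complex.sub_re, Complex.sub_im, Complex.one_re, Complex.one_im,
    Complex.neg_re, Complex.neg_im]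
  field_simp
  ring

theorem cluster_zero_min :
    IsLeast
      {y : ℝ | ∃ a b : ℂ,
        y = (1 / (2 * Real.pi)) *
          ∫ x in (-Real.pi)..Real.pi, ‖sgn x - a - b * x‖ ^ 2}
      (1 / 4) := by
  have hpi := Real.pi_pos
  constructor
  · refine ⟨0, ((3 / (2 * Real.pi) : ℝ) : ℂ), ?_⟩
    rw [eval]
    simp only [Complex.ofReal_re, Complex.ofReal_im, Complex.zero_re, Complex.zero_im]
    field_simp
    ring
  · rintro y ⟨a, b, rfl⟩
    rw [eval]
    nlinarith [sq_nonneg (2 * Real.pi * b.re - 3), sq_nonneg a.re, sq_nonneg a.im,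
      sq_nonneg b.im, sq_nonneg Real.pi, Real.pi_pos, sq_nonneg (Real.pi * b.im)]
end
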